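/- Let P be a self-adjoint kernel on ℝ × 𝕋 × ℤ of the form P(x,y,p) = f(x,y)·δ₁(p) + h(x,y)·δ₀(p) + conj(f(x-1,y))·δ₋₁(p), where f, h : ℝ × 𝕋 → ℂ are bounded, h real-valued, and convolution is (P*P)(x,y,p) = Σ_{q∈ℤ} P(x,y,q)·P(x+q,y,p-q). Then P*P = P if and only if for all (x,y): (1) f(x,y)·f(x+1,y) = 0, (2) f(x,y)·[h(x+1,y) + h(x,y) − 1] = 0, and (3) |f(x,y)|² + |f(x-1,y)|² = h(x,y)·(1 − h(x,y)). -/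

import Mathlib

open Complex

/-- `e t = exp(2πit)`. -/
noncomputable def e (t : ℝ) : ℂ := Complex.exp (2 * Real.pi * Complex.I * t)

lemma tsum_three (g : ℤ → ℂ) (hg : ∀ q, q ≠ -1 → q ≠ 0 → q ≠ 1 → g q = 0) :
    ∑' q, g q = g (-1) + g 0 + g 1 := by
  rw [tsum_eq_sum (s := ({-1, 0, 1} : Finset ℤ)) (by
    intro q hq
    simp only [Finset.mem_insert, Finset.mem_singleton] at hq
    push_neg at hq
    exact hg q hq.1 hq.2.1 hq.2.2)]
  norm_num [Finset.sum_insert]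
  ring

theorem stmt0 (f : ℝ → UnitAddCircle → ℂ) (h : ℝ → UnitAddCircle → ℝ)
    (hfb : ∃ M : ℝ, ∀ x y, ‖f x y‖ ≤ M)
    (hhb : ∃ M : ℝ, ∀ x y, |h x y| ≤ M)
    (P : ℝ → UnitAddCircle → ℤ → ℂ)
    (hP : ∀ x y p, P x y p =
      f x y * (if p = 1 then 1 else 0) + (h x y : ℂ) * (if p = 0 then 1 else 0) +
        (starRingEnd ℂ) (f (x - 1) y) * (if p = -1 then 1 else 0)) :
    (∀ x y p, (∑' q : ℤ, P x y q * P (x + q) y (p - q)) = P x y p) ↔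
      (∀ (x : ℝ) (y : UnitAddCircle),
        f x y * f (x + 1) y = 0 ∧
        f x y * ((h (x + 1) y + h x y - 1 : ℝ) : ℂ) = 0 ∧
        ‖f x y‖ ^ 2 + ‖f (x - 1) y‖ ^ 2 = h x y * (1 - h x y)) := by
  have key : ∀ x y p, (∑' q : ℤ, P x y q * P (x + q) y (p - q)) =
      (starRingEnd ℂ) (f (x - 1) y) * P (x - 1) y (p + 1) + (h x y : ℂ) * P x y p +
        f x y * P (x + 1) y (p - 1) := by
    intro x y p
    rw [tsum_three _ (by
      intro q h1 h2 h3
      rw [hP]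
      simp [h1, h2, h3])]
    have a1 : x + ((-1 : ℤ) : ℝ) = x - 1 := by push_cast; ring
    have a2 : x + ((0 : ℤ) : ℝ) = x := by push_cast; ring
    have a3 : x + ((1 : ℤ) : ℝ) = x + 1 := by push_cast; ring
    have b1 : p - (-1 : ℤ) = p + 1 := by ring
    rw [a1, a2, a3, b1, sub_zero, hP x y (-1), hP x y 0, hP x y 1]
    norm_num
  have hx1 : ∀ x : ℝ, x + 1 - 1 = x := fun x => by ring
  constructor
  · intro H x y
    have e2 := H x y 2
    have e1 := H x y 1
    have e0 := H x y 0
    rw [key] at e2 e1 e0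
    simp only [hP] at e2 e1 e0
    norm_num [hx1] at e2 e1 e0
    refine ⟨?_, ?_, ?_⟩
    · rcases e2 with h2 | h2 <;> rw [h2] <;> ring
    · push_cast
      linear_combination e1
    · have e0' : ((normSq (f (x - 1) y) : ℝ) : ℂ) + ((h x y : ℝ) : ℂ) * ((h x y : ℝ) : ℂ)
          + ((normSq (f x y) : ℝ) : ℂ) = ((h x y : ℝ) : ℂ) := by
        rw [normSq_eq_conj_mul_self, normSq_eq_conj_mul_self]
        push_cast
        linear_combination e0
      have e0'' : normSq (f (x - 1) y) + h x y * h x y + normSq (f x y) = h x y := by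
        exact_mod_cast e0'
      rw [Complex.sq_norm, Complex.sq_norm]
      nlinarith [e0'']
  · intro hc x y p
    rw [key, hP x y p, hP (x - 1) y (p + 1), hP (x + 1) y (p - 1)]
    rw [hx1]
    by_cases hp2 : p = 2
    · subst hp2; norm_num
      exact mul_eq_zero.mp (hc x y).1
    by_cases hp1 : p = 1
    · subst hp1; norm_num
      have := (hc x y).2.1
      push_cast at this
      linear_combination this
    by_cases hp0 : p = 0
    · subst hp0; norm_num
      have e3 := (hc x y).2.2
      rw [Complex.sq_norm, Complex.sq_norm] at e3
      have e3' : ((normSq (f x y) + normSq (f (x - 1) y) : ℝ) : ℂ)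
          = ((h x y * (1 - h x y) : ℝ) : ℂ) := by exact_mod_cast e3
      rw [Complex.ofReal_add, normSq_eq_conj_mul_self, normSq_eq_conj_mul_self] at e3'
      push_cast at e3'
      linear_combination e3'
    by_cases hpm1 : p = -1
    · subst hpm1; norm_num
      have := congrArg (starRingEnd ℂ) (hc (x - 1) y).2.1
      simp only [map_mul, map_sub, map_add, map_zero, Complex.conj_ofReal] at this
      rw [sub_add_cancel] at this
      push_cast at this
      linear_combination this
    by_cases hpm2 : p = -2
    · subst hpm2; norm_num
      have := congrArg (starRingEnd ℂ) (hc (x - 2) y).1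
      simp only [map_mul, map_zero] at this
      have hx2 : x - 2 + 1 = x - 1 := by ring
      have hx3 : x - 1 - 1 = x - 2 := by ring
      rw [hx2] at this
      rw [hx3]
      rcases mul_eq_zero.mp this with h2 | h2
      · exact Or.inr ((map_eq_zero _).mp h2)
      · exact Or.inl ((map_eq_zero _).mp h2)
    · split_ifs <;> first | omega | ring
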